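/- Let E_1,…,E_r be CPTP maps on the d×d complex matrices admitting a common positive-definite fixed density matrix ρ. Then the intersection ⋂_{i=1}^r fix(E_i) is itself the fixed-point set of some CPTP map: there exists a CPTP map E with fix(E) = ⋂_{i=1}^r fix(E_i). Moreover this intersection contains ρ, is closed under adjoints and under the ρ-modified product (X,Y) ↦ X ρ^{−1} Y, and is invariant under the map X ↦ ρ^{1/2} X ρ^{−1/2}. -/

import Mathlib

open Matrix
open scoped ComplexOrder

/-- A map on `d × d` complex matrices is CPTP if it admits a Kraus (operator-sum)
representation `E(X) = ∑ k, M k * X * (M k)ᴴ` with `∑ k, (M k)ᴴ * M k = 1`. -/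
def IsCPTP {d : ℕ} (E : Matrix (Fin d) (Fin d) ℂ → Matrix (Fin d) (Fin d) ℂ) : Prop :=
  ∃ (m : ℕ) (M : Fin m → Matrix (Fin d) (Fin d) ℂ),
    (∀ X, E X = ∑ k, M k * X * (M k)ᴴ) ∧ (∑ k, (M k)ᴴ * M k = 1)

/-- The positive semidefinite square root of a positive semidefinite matrix, as defined in
Mathlib (December 2024) under this name (removed since). -/
noncomputable def Matrix.PosSemidef.sqrt {n 𝕜 : Type*} [Fintype n] [DecidableEq n] [RCLike 𝕜]
    {A : Matrix n n 𝕜} (hA : A.PosSemidef) : Matrix n n 𝕜 :=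
  hA.1.eigenvectorUnitary.1 * diagonal ((↑) ∘ (√·) ∘ hA.1.eigenvalues) *
    (star hA.1.eigenvectorUnitary : Matrix n n 𝕜)

lemma Matrix.PosSemidef.sqrt_mul_self {n 𝕜 : Type*} [Fintype n] [DecidableEq n] [RCLike 𝕜]
    {A : Matrix n n 𝕜} (hA : A.PosSemidef) : hA.sqrt * hA.sqrt = A := by
  have hU : (star hA.1.eigenvectorUnitary : Matrix n n 𝕜) * hA.1.eigenvectorUnitary.1 = 1 :=
    Matrix.UnitaryGroup.star_mul_self _
  unfold Matrix.PosSemidef.sqrt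
  rw [show hA.1.eigenvectorUnitary.1 * diagonal ((↑) ∘ (√·) ∘ hA.1.eigenvalues) *
      (star hA.1.eigenvectorUnitary : Matrix n n 𝕜) * (hA.1.eigenvectorUnitary.1 *
      diagonal ((↑) ∘ (√·) ∘ hA.1.eigenvalues) * (star hA.1.eigenvectorUnitary : Matrix n n 𝕜))
      = hA.1.eigenvectorUnitary.1 * diagonal ((↑) ∘ (√·) ∘ hA.1.eigenvalues) *
      ((star hA.1.eigenvectorUnitary : Matrix n n 𝕜) * hA.1.eigenvectorUnitary.1) *
      diagonal ((↑) ∘ (√·) ∘ hA.1.eigenvalues) * (star hA.1.eigenvectorUnitary : Matrix n n 𝕜) by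
    simp only [Matrix.mul_assoc], hU, Matrix.mul_one, Matrix.mul_assoc _ (diagonal _) (diagonal _),
    Matrix.diagonal_mul_diagonal]
  conv_rhs => rw [hA.1.spectral_theorem]
  congr 3
  funext i
  simp only [Function.comp_apply]
  rw [← RCLike.ofReal_mul, Real.mul_self_sqrt (hA.eigenvalues_nonneg i)]

lemma Matrix.PosSemidef.posSemidef_sqrt {n 𝕜 : Type*} [Fintype n] [DecidableEq n] [RCLike 𝕜]
    {A : Matrix n n 𝕜} (hA : A.PosSemidef) : hA.sqrt.IsHermitian := by
  unfold Matrix.PosSemidef.sqrt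
  rw [Matrix.IsHermitian, Matrix.conjTranspose_mul, Matrix.conjTranspose_mul,
    Matrix.diagonal_conjTranspose, Matrix.mul_assoc]
  have hd : star ((RCLike.ofReal : ℝ → 𝕜) ∘ (fun x : ℝ => √x) ∘ hA.1.eigenvalues)
      = (RCLike.ofReal : ℝ → 𝕜) ∘ (fun x : ℝ => √x) ∘ hA.1.eigenvalues := by
    funext i
    simp
  have h1 : ((star hA.1.eigenvectorUnitary : Matrix n n 𝕜))ᴴ = hA.1.eigenvectorUnitary.1 :=
    star_star (hA.1.eigenvectorUnitary.1)
  have h2 : (hA.1.eigenvectorUnitary.1)ᴴ = (star hA.1.eigenvectorUnitary : Matrix n n 𝕜) := rfl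
  rw [hd, h1, h2]

namespace CPTPaux
open Polynomial

variable {d m : ℕ}

lemma trace_nonneg' (B : Matrix (Fin d) (Fin d) ℂ) : 0 ≤ (B * Bᴴ).trace := by
  rw [Matrix.trace]
  refine Finset.sum_nonneg fun i _ => ?_
  rw [Matrix.diag_apply, Matrix.mul_apply]
  exact Finset.sum_nonneg fun j _ => by simpa using mul_star_self_nonneg (B i j)

lemma eq_zero_of_trace' (B : Matrix (Fin d) (Fin d) ℂ) (h : (B * Bᴴ).trace = 0) : B = 0 := by
  ext i j
  rw [Matrix.trace] at h
  have h1 := (Finset.sum_eq_zero_iff_of_nonneg (fun i _ => by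
    rw [Matrix.diag_apply, Matrix.mul_apply]
    exact Finset.sum_nonneg fun j _ => by simpa using mul_star_self_nonneg (B i j))).mp
      h i (Finset.mem_univ i)
  rw [Matrix.diag_apply, Matrix.mul_apply] at h1
  have h2 := (Finset.sum_eq_zero_iff_of_nonneg (fun j _ => by
    simpa using mul_star_self_nonneg (B i j))).mp h1 j (Finset.mem_univ j)
  simp only [Matrix.conjTranspose_apply, Matrix.zero_apply] at h2 ⊢
  rw [Complex.star_def, Complex.mul_conj] at h2
  exact_mod_cast Complex.normSq_eq_zero.mp (by exact_mod_cast h2)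

lemma sqrt_isUnit {ρ : Matrix (Fin d) (Fin d) ℂ} (hρ : ρ.PosDef) :
    IsUnit hρ.posSemidef.sqrt := by
  rw [Matrix.isUnit_iff_isUnit_det]
  have h : hρ.posSemidef.sqrt.det * hρ.posSemidef.sqrt.det = ρ.det := by
    rw [← Matrix.det_mul, hρ.posSemidef.sqrt_mul_self]
  have hne : ρ.det ≠ 0 := hρ.det_pos.ne'
  exact isUnit_iff_ne_zero.mpr fun h0 => hne (by rw [← h, h0, mul_zero])

lemma conj_eq (P : Matrix (Fin d) (Fin d) ℂ) (hP : P.PosDef) (C : Matrix (Fin d) (Fin d) ℂ) :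
    C * P * Cᴴ = (C * hP.posSemidef.sqrt) * (C * hP.posSemidef.sqrt)ᴴ := by
  have hherm : (hP.posSemidef.sqrt)ᴴ = hP.posSemidef.sqrt := hP.posSemidef.posSemidef_sqrt
  have hss := hP.posSemidef.sqrt_mul_self
  rw [Matrix.conjTranspose_mul, hherm]
  calc C * P * Cᴴ = C * (hP.posSemidef.sqrt * hP.posSemidef.sqrt) * Cᴴ := by rw [hss]
    _ = C * hP.posSemidef.sqrt * (hP.posSemidef.sqrt * Cᴴ) := by
        simp only [Matrix.mul_assoc]

lemma trace_conj_nonneg (P : Matrix (Fin d) (Fin d) ℂ) (hP : P.PosDef)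
    (C : Matrix (Fin d) (Fin d) ℂ) : 0 ≤ (C * P * Cᴴ).trace := by
  rw [conj_eq P hP C]; exact trace_nonneg' _

lemma eq_zero_of_trace_conj (P : Matrix (Fin d) (Fin d) ℂ) (hP : P.PosDef)
    (C : Matrix (Fin d) (Fin d) ℂ) (h : (C * P * Cᴴ).trace = 0) : C = 0 := by
  rw [conj_eq P hP C] at h
  have h2 := eq_zero_of_trace' _ h
  have hu := sqrt_isUnit hP
  calc C = C * hP.posSemidef.sqrt * (hP.posSemidef.sqrt)⁻¹ := by
        rw [Matrix.mul_assoc, Matrix.mul_nonsing_inv _ ((Matrix.isUnit_iff_isUnit_det _).mp hu),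
          Matrix.mul_one]
    _ = 0 := by rw [h2, Matrix.zero_mul]

lemma trace_kraus (M : Fin m → Matrix (Fin d) (Fin d) ℂ)
    (hM1 : ∑ k, (M k)ᴴ * M k = 1) (Q : Matrix (Fin d) (Fin d) ℂ) :
    (∑ k, M k * Q * (M k)ᴴ).trace = Q.trace := by
  rw [Matrix.trace_sum]
  calc ∑ k, (M k * Q * (M k)ᴴ).trace = ∑ k, ((M k)ᴴ * (M k * Q)).trace := by
        refine Finset.sum_congr rfl fun k _ => ?_
        rw [Matrix.trace_mul_comm]
    _ = ((∑ k, (M k)ᴴ * M k) * Q).trace := by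
        rw [Finset.sum_mul, ← Matrix.trace_sum]
        simp only [Matrix.mul_assoc]
    _ = Q.trace := by rw [hM1, Matrix.one_mul]

lemma kraus_fix_comm (M : Fin m → Matrix (Fin d) (Fin d) ℂ)
    (hM1 : ∑ k, (M k)ᴴ * M k = 1)
    (ρ : Matrix (Fin d) (Fin d) ℂ) (hρ : ρ.PosDef)
    (hρfix : ∑ k, M k * ρ * (M k)ᴴ = ρ)
    (X : Matrix (Fin d) (Fin d) ℂ) (hX : ∑ k, M k * X * (M k)ᴴ = X) :
    ∀ k, M k * (X * ρ⁻¹) = X * ρ⁻¹ * M k := by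
  have hdet : IsUnit ρ.det := (Matrix.isUnit_iff_isUnit_det ρ).mp hρ.isUnit
  have h1 : ρ * ρ⁻¹ = 1 := Matrix.mul_nonsing_inv ρ hdet
  have h2 : ρ⁻¹ * ρ = 1 := Matrix.nonsing_inv_mul ρ hdet
  have hιH : (ρ⁻¹)ᴴ = ρ⁻¹ := by rw [Matrix.conjTranspose_nonsing_inv, hρ.1.eq]
  have hXH : ∑ k, M k * Xᴴ * (M k)ᴴ = Xᴴ := by
    have := congrArg Matrix.conjTranspose hX
    simpa [Matrix.conjTranspose_sum, Matrix.conjTranspose_mul, Matrix.mul_assoc] using this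
  have hcan1 : ∀ Z : Matrix (Fin d) (Fin d) ℂ, ρ * (ρ⁻¹ * Z) = Z := fun Z => by
    rw [← Matrix.mul_assoc, h1, Matrix.one_mul]
  have hcan2 : ∀ Z : Matrix (Fin d) (Fin d) ℂ, ρ⁻¹ * (ρ * Z) = Z := fun Z => by
    rw [← Matrix.mul_assoc, h2, Matrix.one_mul]
  have hper : ∀ k, (M k * X - X * ρ⁻¹ * (M k * ρ)) * ρ⁻¹ * (M k * X - X * ρ⁻¹ * (M k * ρ))ᴴ =
      M k * (X * ρ⁻¹ * Xᴴ) * (M k)ᴴ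
      - M k * X * (M k)ᴴ * (ρ⁻¹ * Xᴴ)
      - X * ρ⁻¹ * (M k * Xᴴ * (M k)ᴴ)
      + X * ρ⁻¹ * (M k * ρ * (M k)ᴴ) * (ρ⁻¹ * Xᴴ) := by
    intro k
    simp only [Matrix.conjTranspose_sub, Matrix.conjTranspose_mul, hιH, hρ.1.eq,
      Matrix.sub_mul, Matrix.mul_sub, Matrix.mul_assoc, hcan1, hcan2]
    abel
  have hsum : ∑ k, (M k * X - X * ρ⁻¹ * (M k * ρ)) * ρ⁻¹ * (M k * X - X * ρ⁻¹ * (M k * ρ))ᴴ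
      = (∑ k, M k * (X * ρ⁻¹ * Xᴴ) * (M k)ᴴ) - X * ρ⁻¹ * Xᴴ := by
    rw [Finset.sum_congr rfl (fun k _ => hper k)]
    rw [Finset.sum_add_distrib, Finset.sum_sub_distrib, Finset.sum_sub_distrib]
    have e2 : ∑ k, M k * X * (M k)ᴴ * (ρ⁻¹ * Xᴴ) = X * (ρ⁻¹ * Xᴴ) := by
      rw [← Finset.sum_mul, hX]
    have e3 : ∑ k, X * ρ⁻¹ * (M k * Xᴴ * (M k)ᴴ) = X * ρ⁻¹ * Xᴴ := by
      rw [← Finset.mul_sum, hXH]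
    have e4 : ∑ k, X * ρ⁻¹ * (M k * ρ * (M k)ᴴ) * (ρ⁻¹ * Xᴴ) = X * (ρ⁻¹ * Xᴴ) := by
      calc ∑ k, X * ρ⁻¹ * (M k * ρ * (M k)ᴴ) * (ρ⁻¹ * Xᴴ)
          = X * ρ⁻¹ * (∑ k, M k * ρ * (M k)ᴴ) * (ρ⁻¹ * Xᴴ) := by
            rw [Finset.mul_sum, Finset.sum_mul]
        _ = X * ρ⁻¹ * ρ * (ρ⁻¹ * Xᴴ) := by rw [hρfix]
        _ = X * (ρ⁻¹ * Xᴴ) := by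
            rw [Matrix.mul_assoc X, h2, Matrix.mul_one]
    rw [e2, e3, e4]
    rw [Matrix.mul_assoc X ρ⁻¹ Xᴴ]
    abel
  have htr : ∑ k, ((M k * X - X * ρ⁻¹ * (M k * ρ)) * ρ⁻¹
      * (M k * X - X * ρ⁻¹ * (M k * ρ))ᴴ).trace = 0 := by
    rw [← Matrix.trace_sum, hsum, Matrix.trace_sub, trace_kraus M hM1, sub_self]
  have hC0 : ∀ k, M k * X - X * ρ⁻¹ * (M k * ρ) = 0 := by
    intro k
    refine eq_zero_of_trace_conj ρ⁻¹ hρ.inv _ ?_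
    exact (Finset.sum_eq_zero_iff_of_nonneg (fun k _ =>
      trace_conj_nonneg ρ⁻¹ hρ.inv _)).mp htr k (Finset.mem_univ k)
  intro k
  have hk : M k * X = X * ρ⁻¹ * (M k * ρ) := sub_eq_zero.mp (hC0 k)
  calc M k * (X * ρ⁻¹) = (M k * X) * ρ⁻¹ := by rw [Matrix.mul_assoc]
    _ = X * ρ⁻¹ * (M k * ρ) * ρ⁻¹ := by rw [hk]
    _ = X * ρ⁻¹ * M k := by
        simp only [Matrix.mul_assoc, h1, Matrix.mul_one]

lemma kraus_dual_fix_comm (M : Fin m → Matrix (Fin d) (Fin d) ℂ)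
    (hM1 : ∑ k, (M k)ᴴ * M k = 1)
    (ρ : Matrix (Fin d) (Fin d) ℂ) (hρ : ρ.PosDef)
    (hρfix : ∑ k, M k * ρ * (M k)ᴴ = ρ)
    (Z : Matrix (Fin d) (Fin d) ℂ) (hZ : ∑ k, (M k)ᴴ * Z * M k = Z) :
    ∀ k, Z * M k = M k * Z := by
  have hZH : ∑ k, (M k)ᴴ * Zᴴ * M k = Zᴴ := by
    have := congrArg Matrix.conjTranspose hZ
    simpa [Matrix.conjTranspose_sum, Matrix.conjTranspose_mul, Matrix.mul_assoc] using this
  have hper : ∀ k, (Z * M k - M k * Z)ᴴ * (Z * M k - M k * Z) =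
      (M k)ᴴ * (Zᴴ * Z) * M k
      - ((M k)ᴴ * Zᴴ * M k) * Z
      - Zᴴ * ((M k)ᴴ * Z * M k)
      + Zᴴ * ((M k)ᴴ * M k) * Z := by
    intro k
    simp only [Matrix.conjTranspose_sub, Matrix.conjTranspose_mul,
      Matrix.sub_mul, Matrix.mul_sub, Matrix.mul_assoc]
    abel
  have hsum : ∑ k, (Z * M k - M k * Z)ᴴ * (Z * M k - M k * Z)
      = (∑ k, (M k)ᴴ * (Zᴴ * Z) * M k) - Zᴴ * Z := by
    rw [Finset.sum_congr rfl (fun k _ => hper k)]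
    rw [Finset.sum_add_distrib, Finset.sum_sub_distrib, Finset.sum_sub_distrib]
    have e2 : ∑ k, ((M k)ᴴ * Zᴴ * M k) * Z = Zᴴ * Z := by
      rw [← Finset.sum_mul, hZH]
    have e3 : ∑ k, Zᴴ * ((M k)ᴴ * Z * M k) = Zᴴ * Z := by
      rw [← Finset.mul_sum, hZ]
    have e4 : ∑ k, Zᴴ * ((M k)ᴴ * M k) * Z = Zᴴ * Z := by
      calc ∑ k, Zᴴ * ((M k)ᴴ * M k) * Z = Zᴴ * (∑ k, (M k)ᴴ * M k) * Z := by
            rw [Finset.mul_sum, Finset.sum_mul]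
        _ = Zᴴ * Z := by rw [hM1, Matrix.mul_one]
    rw [e2, e3, e4]
    abel
  -- pair with ρ and take traces
  have hpair : ∀ Q : Matrix (Fin d) (Fin d) ℂ,
      ∑ k, (ρ * ((M k)ᴴ * Q * M k)).trace = (ρ * Q).trace := by
    intro Q
    calc ∑ k, (ρ * ((M k)ᴴ * Q * M k)).trace
        = ∑ k, ((M k * ρ * (M k)ᴴ) * Q).trace := by
          refine Finset.sum_congr rfl fun k _ => ?_
          rw [show ρ * ((M k)ᴴ * Q * M k) = (ρ * (M k)ᴴ * Q) * M k by
              simp only [Matrix.mul_assoc], Matrix.trace_mul_comm,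
            show M k * (ρ * (M k)ᴴ * Q) = (M k * ρ * (M k)ᴴ) * Q by
              simp only [Matrix.mul_assoc]]
      _ = ((∑ k, M k * ρ * (M k)ᴴ) * Q).trace := by
          rw [Finset.sum_mul, Matrix.trace_sum]
      _ = (ρ * Q).trace := by rw [hρfix]
  have htr : ∑ k, (ρ * ((Z * M k - M k * Z)ᴴ * (Z * M k - M k * Z))).trace = 0 := by
    have : ∑ k, (ρ * ((Z * M k - M k * Z)ᴴ * (Z * M k - M k * Z))).trace
        = (ρ * (∑ k, (Z * M k - M k * Z)ᴴ * (Z * M k - M k * Z))).trace := by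
      rw [Finset.mul_sum, Matrix.trace_sum]
    rw [this, hsum, Matrix.mul_sub, Matrix.trace_sub]
    have : (ρ * ∑ k, (M k)ᴴ * (Zᴴ * Z) * M k).trace = (ρ * (Zᴴ * Z)).trace := by
      rw [Finset.mul_sum, Matrix.trace_sum]
      exact hpair (Zᴴ * Z)
    rw [this, sub_self]
  have hres : ∀ k, (ρ * ((Z * M k - M k * Z)ᴴ * (Z * M k - M k * Z))).trace
      = ((Z * M k - M k * Z) * ρ * (Z * M k - M k * Z)ᴴ).trace := by
    intro k
    rw [Matrix.trace_mul_comm, Matrix.mul_assoc, Matrix.trace_mul_comm (Z * M k - M k * Z)ᴴ,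
      Matrix.mul_assoc]
  have hN0 : ∀ k, Z * M k - M k * Z = 0 := by
    intro k
    refine eq_zero_of_trace_conj ρ hρ _ ?_
    have hz := (Finset.sum_eq_zero_iff_of_nonneg (fun k _ => by
      rw [hres k]; exact trace_conj_nonneg ρ hρ _)).mp htr k (Finset.mem_univ k)
    rw [hres k] at hz
    exact hz
  intro k
  exact sub_eq_zero.mp (hN0 k)

lemma fix_of_comm_right (M : Fin m → Matrix (Fin d) (Fin d) ℂ)
    (ρ : Matrix (Fin d) (Fin d) ℂ) (hρfix : ∑ k, M k * ρ * (M k)ᴴ = ρ)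
    (V : Matrix (Fin d) (Fin d) ℂ) (h : ∀ k, (M k)ᴴ * V = V * (M k)ᴴ) :
    ∑ k, M k * (ρ * V) * (M k)ᴴ = ρ * V := by
  calc ∑ k, M k * (ρ * V) * (M k)ᴴ = ∑ k, (M k * ρ * (M k)ᴴ) * V := by
        refine Finset.sum_congr rfl fun k _ => ?_
        calc M k * (ρ * V) * (M k)ᴴ = M k * ρ * (V * (M k)ᴴ) := by
              simp only [Matrix.mul_assoc]
          _ = M k * ρ * ((M k)ᴴ * V) := by rw [h k]
          _ = (M k * ρ * (M k)ᴴ) * V := by simp only [Matrix.mul_assoc]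
    _ = ρ * V := by rw [← Finset.sum_mul, hρfix]

lemma fix_of_comm_left (M : Fin m → Matrix (Fin d) (Fin d) ℂ)
    (ρ : Matrix (Fin d) (Fin d) ℂ) (hρfix : ∑ k, M k * ρ * (M k)ᴴ = ρ)
    (W : Matrix (Fin d) (Fin d) ℂ) (h : ∀ k, W * M k = M k * W) :
    ∑ k, M k * (W * ρ) * (M k)ᴴ = W * ρ := by
  calc ∑ k, M k * (W * ρ) * (M k)ᴴ = ∑ k, W * (M k * ρ * (M k)ᴴ) := by
        refine Finset.sum_congr rfl fun k _ => ?_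
        calc M k * (W * ρ) * (M k)ᴴ = (M k * W) * ρ * (M k)ᴴ := by
              simp only [Matrix.mul_assoc]
          _ = (W * M k) * ρ * (M k)ᴴ := by rw [h k]
          _ = W * (M k * ρ * (M k)ᴴ) := by simp only [Matrix.mul_assoc]
    _ = W * ρ := by rw [← Finset.mul_sum, hρfix]

lemma channel_prod (M : Fin m → Matrix (Fin d) (Fin d) ℂ)
    (hM1 : ∑ k, (M k)ᴴ * M k = 1)
    (ρ : Matrix (Fin d) (Fin d) ℂ) (hρ : ρ.PosDef)
    (hρfix : ∑ k, M k * ρ * (M k)ᴴ = ρ)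
    (X : Matrix (Fin d) (Fin d) ℂ) (hX : ∑ k, M k * X * (M k)ᴴ = X)
    (Y : Matrix (Fin d) (Fin d) ℂ) (hY : ∑ k, M k * Y * (M k)ᴴ = Y) :
    ∑ k, M k * (X * ρ⁻¹ * Y) * (M k)ᴴ = X * ρ⁻¹ * Y := by
  have hc1 := kraus_fix_comm M hM1 ρ hρ hρfix X hX
  calc ∑ k, M k * (X * ρ⁻¹ * Y) * (M k)ᴴ = ∑ k, (X * ρ⁻¹) * (M k * Y * (M k)ᴴ) := by
        refine Finset.sum_congr rfl fun k _ => ?_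
        calc M k * (X * ρ⁻¹ * Y) * (M k)ᴴ = (M k * (X * ρ⁻¹)) * Y * (M k)ᴴ := by
              simp only [Matrix.mul_assoc]
          _ = ((X * ρ⁻¹) * M k) * Y * (M k)ᴴ := by rw [hc1 k]
          _ = (X * ρ⁻¹) * (M k * Y * (M k)ᴴ) := by simp only [Matrix.mul_assoc]
    _ = X * ρ⁻¹ * Y := by rw [← Finset.mul_sum, hY]

lemma channel_delta (M : Fin m → Matrix (Fin d) (Fin d) ℂ)
    (hM1 : ∑ k, (M k)ᴴ * M k = 1)
    (ρ : Matrix (Fin d) (Fin d) ℂ) (hρ : ρ.PosDef)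
    (hρfix : ∑ k, M k * ρ * (M k)ᴴ = ρ)
    (X : Matrix (Fin d) (Fin d) ℂ) (hX : ∑ k, M k * X * (M k)ᴴ = X) :
    ∑ k, M k * (ρ * (X * ρ⁻¹)) * (M k)ᴴ = ρ * (X * ρ⁻¹) := by
  have hιH : (ρ⁻¹)ᴴ = ρ⁻¹ := by rw [Matrix.conjTranspose_nonsing_inv, hρ.1.eq]
  have hc1 := kraus_fix_comm M hM1 ρ hρ hρfix X hX
  have hdual : ∑ k, (M k)ᴴ * (X * ρ⁻¹) * M k = X * ρ⁻¹ := by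
    calc ∑ k, (M k)ᴴ * (X * ρ⁻¹) * M k = ∑ k, ((M k)ᴴ * M k) * (X * ρ⁻¹) := by
          refine Finset.sum_congr rfl fun k _ => ?_
          calc (M k)ᴴ * (X * ρ⁻¹) * M k = (M k)ᴴ * ((X * ρ⁻¹) * M k) := by
                rw [Matrix.mul_assoc]
            _ = (M k)ᴴ * (M k * (X * ρ⁻¹)) := by rw [← hc1 k]
            _ = ((M k)ᴴ * M k) * (X * ρ⁻¹) := by rw [Matrix.mul_assoc]
      _ = X * ρ⁻¹ := by rw [← Finset.sum_mul, hM1, Matrix.one_mul]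
  have hdualH : ∑ k, (M k)ᴴ * (ρ⁻¹ * Xᴴ) * M k = ρ⁻¹ * Xᴴ := by
    have := congrArg Matrix.conjTranspose hdual
    simpa [Matrix.conjTranspose_sum, Matrix.conjTranspose_mul, hιH, Matrix.mul_assoc] using this
  have hc2 : ∀ k, (ρ⁻¹ * Xᴴ) * M k = M k * (ρ⁻¹ * Xᴴ) :=
    kraus_dual_fix_comm M hM1 ρ hρ hρfix _ hdualH
  have hc3 : ∀ k, (M k)ᴴ * (X * ρ⁻¹) = (X * ρ⁻¹) * (M k)ᴴ := by
    intro k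
    have := congrArg Matrix.conjTranspose (hc2 k)
    simpa [Matrix.conjTranspose_mul, hιH, Matrix.mul_assoc] using this
  exact fix_of_comm_right M ρ hρfix (X * ρ⁻¹) hc3

lemma sqrt_conj_poly (ρ : Matrix (Fin d) (Fin d) ℂ) (hρ : ρ.PosDef) :
    ∃ (n : ℕ) (c : ℕ → ℂ), ∀ X : Matrix (Fin d) (Fin d) ℂ,
      hρ.posSemidef.sqrt * X * (hρ.posSemidef.sqrt)⁻¹ =
        ∑ k ∈ Finset.range n, c k • (ρ ^ k * X * (ρ⁻¹) ^ k) := by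
  classical
  set g : Fin d → ℝ := hρ.posSemidef.1.eigenvalues with hg
  have hgpos : ∀ i, 0 < g i := fun i => hρ.eigenvalues_pos i
  set W : Matrix (Fin d) (Fin d) ℂ := (hρ.posSemidef.1.eigenvectorUnitary :
    Matrix (Fin d) (Fin d) ℂ) with hW
  set Ws : Matrix (Fin d) (Fin d) ℂ := (star hρ.posSemidef.1.eigenvectorUnitary :
    Matrix (Fin d) (Fin d) ℂ) with hWs
  have hWsW : Ws * W = 1 := Matrix.UnitaryGroup.star_mul_self _
  have hWWs : W * Ws = 1 := by
    rw [hW, hWs]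
    exact hρ.posSemidef.1.eigenvectorUnitary.2.2
  have hcanW : ∀ Z : Matrix (Fin d) (Fin d) ℂ, W * (Ws * Z) = Z := fun Z => by
    rw [← Matrix.mul_assoc, hWWs, Matrix.one_mul]
  have hcanWs : ∀ Z : Matrix (Fin d) (Fin d) ℂ, Ws * (W * Z) = Z := fun Z => by
    rw [← Matrix.mul_assoc, hWsW, Matrix.one_mul]
  -- conjugation lemmas
  have hconjmul : ∀ a b : Fin d → ℂ,
      (W * diagonal a * Ws) * (W * diagonal b * Ws) = W * diagonal (a * b) * Ws := by
    intro a b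
    calc (W * diagonal a * Ws) * (W * diagonal b * Ws)
        = W * (diagonal a * (Ws * (W * (diagonal b * Ws)))) := by
          simp only [Matrix.mul_assoc]
      _ = W * (diagonal a * (diagonal b * Ws)) := by rw [hcanWs]
      _ = W * ((diagonal a * diagonal b) * Ws) := by rw [Matrix.mul_assoc]
      _ = W * (diagonal (a * b) * Ws) := by rw [Matrix.diagonal_mul_diagonal]; rfl
      _ = W * diagonal (a * b) * Ws := by rw [Matrix.mul_assoc]
  have hconjpow : ∀ (a : Fin d → ℂ) (k : ℕ),
      (W * diagonal a * Ws) ^ k = W * diagonal (a ^ k) * Ws := by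
    intro a k
    induction k with
    | zero =>
      simp only [pow_zero]
      have h1 : diagonal (1 : Fin d → ℂ) = (1 : Matrix (Fin d) (Fin d) ℂ) :=
        Matrix.diagonal_one
      rw [h1, Matrix.mul_one, hWWs]
    | succ k ih =>
      rw [pow_succ, ih, hconjmul, ← pow_succ]
  have hconjinv : ∀ (a : Fin d → ℂ), (∀ i, a i ≠ 0) →
      (W * diagonal a * Ws)⁻¹ = W * diagonal a⁻¹ * Ws := by
    intro a ha
    refine Matrix.inv_eq_right_inv ?_
    rw [hconjmul]
    have h0 : (a * a⁻¹ : Fin d → ℂ) = 1 := by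
      funext i; simp [mul_inv_cancel₀ (ha i)]
    have h1 : diagonal (1 : Fin d → ℂ) = (1 : Matrix (Fin d) (Fin d) ℂ) :=
      Matrix.diagonal_one
    rw [h0, h1, Matrix.mul_one, hWWs]
  -- spectral data
  set v : Fin d → ℂ := RCLike.ofReal ∘ g with hv
  have hvne : ∀ i, v i ≠ 0 := fun i => by
    simp only [hv, Function.comp_apply, ne_eq, RCLike.ofReal_eq_zero]
    exact (hgpos i).ne'
  have hρeq : ρ = W * diagonal v * Ws := hρ.posSemidef.1.spectral_theorem
  have hρpow : ∀ k : ℕ, ρ ^ k = W * diagonal (v ^ k) * Ws := fun k => by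
    rw [hρeq, hconjpow]
  have hρinv : ρ⁻¹ = W * diagonal v⁻¹ * Ws := by rw [hρeq, hconjinv v hvne]
  have hρinvpow : ∀ k : ℕ, (ρ⁻¹) ^ k = W * diagonal (v⁻¹ ^ k) * Ws := fun k => by
    rw [hρinv, hconjpow]
  set sv : Fin d → ℂ := (↑) ∘ Real.sqrt ∘ g with hsv
  have hsvne : ∀ i, sv i ≠ 0 := fun i => by
    simp only [hsv, Function.comp_apply, ne_eq, Complex.ofReal_eq_zero]
    exact (Real.sqrt_pos.mpr (hgpos i)).ne'
  have hsqrt : hρ.posSemidef.sqrt = W * diagonal sv * Ws := rfl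
  have hsqrtinv : (hρ.posSemidef.sqrt)⁻¹ = W * diagonal sv⁻¹ * Ws := by
    rw [hsqrt, hconjinv sv hsvne]
  -- interpolation polynomial
  set s : Finset ℝ := Finset.image (fun p : Fin d × Fin d => g p.1 / g p.2) Finset.univ with hs
  set p : Polynomial ℝ := Lagrange.interpolate s id Real.sqrt with hp
  have heval : ∀ i j : Fin d, p.eval (g i / g j) = Real.sqrt (g i / g j) := by
    intro i j
    have hmem : g i / g j ∈ s := Finset.mem_image.mpr ⟨(i, j), Finset.mem_univ _, rfl⟩
    have := Lagrange.eval_interpolate_at_node (v := id) Real.sqrt (Set.injOn_id _) hmem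
    exact this
  refine ⟨p.natDegree + 1, fun k => ((p.coeff k : ℝ) : ℂ), ?_⟩
  intro X
  -- scalar identity
  have hscalar : ∀ i j : Fin d,
      sv i * (sv j)⁻¹ = ∑ k ∈ Finset.range (p.natDegree + 1),
        ((p.coeff k : ℝ) : ℂ) * ((v i) ^ k * ((v j)⁻¹) ^ k) := by
    intro i j
    have h1 : ((Real.sqrt (g i) / Real.sqrt (g j) : ℝ) : ℂ)
        = ((p.eval (g i / g j) : ℝ) : ℂ) := by
      rw [heval i j, Real.sqrt_div (hgpos i).le]
    have h2 : p.eval (g i / g j) = ∑ k ∈ Finset.range (p.natDegree + 1),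
        p.coeff k * (g i / g j) ^ k := Polynomial.eval_eq_sum_range _
    calc sv i * (sv j)⁻¹ = ((Real.sqrt (g i) / Real.sqrt (g j) : ℝ) : ℂ) := by
          simp [hsv, div_eq_mul_inv]
      _ = ((∑ k ∈ Finset.range (p.natDegree + 1), p.coeff k * (g i / g j) ^ k : ℝ) : ℂ) := by
          rw [h1, h2]
      _ = ∑ k ∈ Finset.range (p.natDegree + 1),
            ((p.coeff k : ℝ) : ℂ) * ((v i) ^ k * ((v j)⁻¹) ^ k) := by
          push_cast
          refine Finset.sum_congr rfl fun k _ => ?_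
          rw [div_eq_mul_inv, mul_pow]
          simp [hv, div_eq_mul_inv]
  -- reduce to diagonal computation
  set Y : Matrix (Fin d) (Fin d) ℂ := Ws * X * W with hY
  have hkey : diagonal sv * Y * diagonal sv⁻¹ = ∑ k ∈ Finset.range (p.natDegree + 1),
      ((p.coeff k : ℝ) : ℂ) • (diagonal (v ^ k) * Y * diagonal (v⁻¹ ^ k)) := by
    ext i j
    simp only [Matrix.sum_apply, Matrix.smul_apply, smul_eq_mul, Matrix.mul_diagonal,
      Matrix.diagonal_mul, Pi.inv_apply, Pi.pow_apply]
    calc sv i * Y i j * (sv j)⁻¹ = (sv i * (sv j)⁻¹) * Y i j := by ring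
      _ = (∑ k ∈ Finset.range (p.natDegree + 1),
            ((p.coeff k : ℝ) : ℂ) * ((v i) ^ k * ((v j)⁻¹) ^ k)) * Y i j := by
          rw [hscalar i j]
      _ = ∑ k ∈ Finset.range (p.natDegree + 1),
            ((p.coeff k : ℝ) : ℂ) * (v i ^ k * Y i j * ((v j)⁻¹) ^ k) := by
          rw [Finset.sum_mul]
          refine Finset.sum_congr rfl fun k _ => ?_
          ring
  calc hρ.posSemidef.sqrt * X * (hρ.posSemidef.sqrt)⁻¹
      = (W * diagonal sv * Ws) * X * (W * diagonal sv⁻¹ * Ws) := by rw [hsqrtinv, hsqrt]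
    _ = W * (diagonal sv * Y * diagonal sv⁻¹) * Ws := by
        simp only [hY, Matrix.mul_assoc]
    _ = W * (∑ k ∈ Finset.range (p.natDegree + 1),
          ((p.coeff k : ℝ) : ℂ) • (diagonal (v ^ k) * Y * diagonal (v⁻¹ ^ k))) * Ws := by
        rw [hkey]
    _ = ∑ k ∈ Finset.range (p.natDegree + 1),
          ((p.coeff k : ℝ) : ℂ) • (ρ ^ k * X * (ρ⁻¹) ^ k) := by
        rw [Finset.mul_sum, Finset.sum_mul]
        refine Finset.sum_congr rfl fun k _ => ?_
        rw [hρpow k, hρinvpow k, hY, Matrix.mul_smul, Matrix.smul_mul]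
        congr 1
        simp only [Matrix.mul_assoc]

lemma kraus_apply_sum (M : Fin m → Matrix (Fin d) (Fin d) ℂ) (n : ℕ) (c : ℕ → ℂ)
    (Z : ℕ → Matrix (Fin d) (Fin d) ℂ) :
    ∑ l, M l * (∑ k ∈ Finset.range n, c k • Z k) * (M l)ᴴ
      = ∑ k ∈ Finset.range n, c k • (∑ l, M l * Z k * (M l)ᴴ) := by
  simp only [Finset.mul_sum, Finset.sum_mul, Matrix.mul_smul, Matrix.smul_mul]
  rw [Finset.sum_comm]
  exact Finset.sum_congr rfl fun k _ => Finset.smul_sum.symm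

end CPTPaux

open CPTPaux in
/-- For CPTP maps `E 1, …, E r` with a common positive-definite fixed density matrix `ρ`,
the intersection `⋂ i, fix(E i)` is itself the fixed-point set of some CPTP map; moreover
it contains `ρ`, is closed under adjoints and the `ρ`-modified product
`(X,Y) ↦ X ρ⁻¹ Y`, and is invariant under `X ↦ ρ^{1/2} X ρ^{-1/2}`. -/
theorem intersection_of_fixed_point_sets_is_fixed_point_set {d r : ℕ}
    (E : Fin r → (Matrix (Fin d) (Fin d) ℂ → Matrix (Fin d) (Fin d) ℂ))
    (hE : ∀ i, IsCPTP (E i))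
    (ρ : Matrix (Fin d) (Fin d) ℂ) (hρ : ρ.PosDef) (hρtr : ρ.trace = 1)
    (hfixρ : ∀ i, E i ρ = ρ) :
    (∃ F : Matrix (Fin d) (Fin d) ℂ → Matrix (Fin d) (Fin d) ℂ,
      IsCPTP F ∧ ∀ X, (F X = X ↔ ∀ i, E i X = X)) ∧
    (∀ i, E i ρ = ρ) ∧
    (∀ X, (∀ i, E i X = X) → ∀ i, E i Xᴴ = Xᴴ) ∧
    (∀ X Y, (∀ i, E i X = X) → (∀ i, E i Y = Y) →
      ∀ i, E i (X * ρ⁻¹ * Y) = X * ρ⁻¹ * Y) ∧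
    (∀ X, (∀ i, E i X = X) →
      ∀ i, E i (hρ.posSemidef.sqrt * X * (hρ.posSemidef.sqrt)⁻¹)
          = hρ.posSemidef.sqrt * X * (hρ.posSemidef.sqrt)⁻¹) := by
  classical
  obtain ⟨m_, M_, hrep, hunit⟩ :
      ∃ (m_ : Fin r → ℕ) (M_ : ∀ i, Fin (m_ i) → Matrix (Fin d) (Fin d) ℂ),
        (∀ i X, E i X = ∑ k, M_ i k * X * (M_ i k)ᴴ) ∧
        (∀ i, ∑ k, (M_ i k)ᴴ * M_ i k = 1) := by
    choose m_ M_ h1 h2 using hE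
    exact ⟨m_, M_, fun i => (h1 i), h2⟩
  have hdet : IsUnit ρ.det := (Matrix.isUnit_iff_isUnit_det ρ).mp hρ.isUnit
  have hinvmul : ρ⁻¹ * ρ = 1 := Matrix.nonsing_inv_mul ρ hdet
  have hρfixK : ∀ i, ∑ k, M_ i k * ρ * (M_ i k)ᴴ = ρ := fun i =>
    (hrep i ρ).symm.trans (hfixρ i)
  have hfixK : ∀ (X : Matrix (Fin d) (Fin d) ℂ), (∀ i, E i X = X) →
      ∀ i, ∑ k, M_ i k * X * (M_ i k)ᴴ = X := fun X hX i =>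
    (hrep i X).symm.trans (hX i)
  refine ⟨?_, hfixρ, ?_, ?_, ?_⟩
  · -- existence of F
    by_cases hr : r = 0
    · subst hr
      refine ⟨id, ⟨1, fun _ => 1, fun X => by simp, by simp⟩, fun X => ?_⟩
      exact ⟨fun _ i => i.elim0, fun _ => rfl⟩
    · have hrpos : (0:ℝ) < r := by
        have : 0 < r := Nat.pos_of_ne_zero hr
        exact_mod_cast this
      have hrne : ((r:ℝ):ℂ) ≠ 0 := by
        simp only [ne_eq, Complex.ofReal_eq_zero]
        exact hrpos.ne'
      set c : ℂ := ((Real.sqrt r : ℝ) : ℂ)⁻¹ with hc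
      have hc0 : c ≠ 0 := by
        simp only [hc, ne_eq, inv_eq_zero, Complex.ofReal_eq_zero]
        exact (Real.sqrt_pos.mpr hrpos).ne'
      have hcstar : star c = c := by
        simp only [hc, star_inv₀, Complex.star_def, Complex.conj_ofReal]
      have hcc : c * c = ((r:ℝ):ℂ)⁻¹ := by
        rw [hc, ← mul_inv, ← Complex.ofReal_mul, Real.mul_self_sqrt hrpos.le]
      set e : (Σ i : Fin r, Fin (m_ i)) ≃ Fin (Fintype.card (Σ i : Fin r, Fin (m_ i))) :=
        Fintype.equivFin _ with he
      set MB : Fin (Fintype.card (Σ i : Fin r, Fin (m_ i))) → Matrix (Fin d) (Fin d) ℂ :=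
        fun k => c • M_ (e.symm k).1 (e.symm k).2 with hMB
      have htrans : ∀ f : (Σ i : Fin r, Fin (m_ i)) → Matrix (Fin d) (Fin d) ℂ,
          ∑ k, f (e.symm k) = ∑ i, ∑ j, f ⟨i, j⟩ := by
        intro f
        rw [Equiv.sum_comp e.symm f, ← Finset.univ_sigma_univ, Finset.sum_sigma]
      have hBunit : ∑ k, (MB k)ᴴ * MB k = 1 := by
        calc ∑ k, (MB k)ᴴ * MB k
            = ∑ k, (c * c) • ((M_ (e.symm k).1 (e.symm k).2)ᴴ * M_ (e.symm k).1 (e.symm k).2) := by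
              refine Finset.sum_congr rfl fun k _ => ?_
              rw [hMB, Matrix.conjTranspose_smul, Matrix.smul_mul, Matrix.mul_smul,
                smul_smul, hcstar]
          _ = (c * c) • ∑ i, ∑ j, ((M_ i j)ᴴ * M_ i j) := by
              rw [← Finset.smul_sum]
              congr 1
              exact htrans (fun σ => (M_ σ.1 σ.2)ᴴ * M_ σ.1 σ.2)
          _ = (c * c) • ∑ _i : Fin r, (1 : Matrix (Fin d) (Fin d) ℂ) := by
              congr 1
              exact Finset.sum_congr rfl fun i _ => hunit i
          _ = 1 := by
              rw [Finset.sum_const, Finset.card_univ, Fintype.card_fin, hcc,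
                ← Nat.cast_smul_eq_nsmul ℂ r (1 : Matrix (Fin d) (Fin d) ℂ), smul_smul]
              rw [show ((r:ℕ):ℂ) = ((r:ℝ):ℂ) by push_cast; ring]
              rw [inv_mul_cancel₀ hrne, one_smul]
      have hFrep : ∀ Z : Matrix (Fin d) (Fin d) ℂ, ∑ k, MB k * Z * (MB k)ᴴ
          = ((r:ℝ):ℂ)⁻¹ • ∑ i, E i Z := by
        intro Z
        calc ∑ k, MB k * Z * (MB k)ᴴ
            = ∑ k, (c * c) • (M_ (e.symm k).1 (e.symm k).2 * Z * (M_ (e.symm k).1 (e.symm k).2)ᴴ) := by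
              refine Finset.sum_congr rfl fun k _ => ?_
              rw [hMB, Matrix.conjTranspose_smul, Matrix.smul_mul, Matrix.smul_mul,
                Matrix.mul_smul, smul_smul, hcstar]
          _ = (c * c) • ∑ i, ∑ j, (M_ i j * Z * (M_ i j)ᴴ) := by
              rw [← Finset.smul_sum]
              congr 1
              exact htrans (fun σ => M_ σ.1 σ.2 * Z * (M_ σ.1 σ.2)ᴴ)
          _ = ((r:ℝ):ℂ)⁻¹ • ∑ i, E i Z := by
              rw [hcc]
              congr 1
              exact Finset.sum_congr rfl fun i _ => (hrep i Z).symm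
      have havg : ∀ Z : Matrix (Fin d) (Fin d) ℂ, (∀ i, E i Z = Z) →
          ∑ k, MB k * Z * (MB k)ᴴ = Z := by
        intro Z hZ
        rw [hFrep Z, Finset.sum_congr rfl (fun i _ => hZ i), Finset.sum_const,
          Finset.card_univ, Fintype.card_fin,
          ← Nat.cast_smul_eq_nsmul ℂ r Z, smul_smul,
          show ((r:ℕ):ℂ) = ((r:ℝ):ℂ) by push_cast; ring,
          inv_mul_cancel₀ hrne, one_smul]
      refine ⟨fun Z => ∑ k, MB k * Z * (MB k)ᴴ, ⟨_, MB, fun X => rfl, hBunit⟩, fun X => ?_⟩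
      constructor
      · intro hFX i
        have hcomm := kraus_fix_comm MB hBunit ρ hρ (havg ρ hfixρ) X hFX
        have hcommi : ∀ j : Fin (m_ i), (X * ρ⁻¹) * M_ i j = M_ i j * (X * ρ⁻¹) := by
          intro j
          have h1 := hcomm (e ⟨i, j⟩)
          simp only [hMB] at h1
          rw [show e.symm (e ⟨i, j⟩) = ⟨i, j⟩ from Equiv.symm_apply_apply e ⟨i, j⟩] at h1
          rw [Matrix.smul_mul, Matrix.mul_smul] at h1
          exact (smul_right_injective (Matrix (Fin d) (Fin d) ℂ) hc0 h1).symm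
        have h2 := fix_of_comm_left (M_ i) ρ (hρfixK i) (X * ρ⁻¹) hcommi
        have h3 : X * ρ⁻¹ * ρ = X := by
          rw [Matrix.mul_assoc, hinvmul, Matrix.mul_one]
        rw [h3] at h2
        rw [hrep i, h2]
      · exact havg X
  · -- adjoints
    intro X hX i
    have h1 := hfixK X hX i
    have h2 := congrArg Matrix.conjTranspose h1
    rw [hrep i]
    simpa [Matrix.conjTranspose_sum, Matrix.conjTranspose_mul, Matrix.mul_assoc] using h2
  · -- products
    intro X Y hX hY i
    rw [hrep i]
    exact channel_prod (M_ i) (hunit i) ρ hρ (hρfixK i) X (hfixK X hX i) Y (hfixK Y hY i)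
  · -- modular half-power
    intro X hX i
    obtain ⟨n, c, hpoly⟩ := sqrt_conj_poly ρ hρ
    have hpow : ∀ (k : ℕ) (j : Fin r),
        ∑ l, M_ j l * (ρ ^ k * X * (ρ⁻¹) ^ k) * (M_ j l)ᴴ = ρ ^ k * X * (ρ⁻¹) ^ k := by
      intro k
      induction k with
      | zero => simpa using hfixK X hX
      | succ k ih =>
        intro j
        have heq : ρ ^ (k+1) * X * (ρ⁻¹) ^ (k+1)
            = ρ * ((ρ ^ k * X * (ρ⁻¹) ^ k) * ρ⁻¹) := by
          rw [pow_succ' ρ k, pow_succ (ρ⁻¹) k]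
          simp only [Matrix.mul_assoc]
        rw [heq]
        exact channel_delta (M_ j) (hunit j) ρ hρ (hρfixK j) _ (ih j)
    rw [hpoly X, hrep i, kraus_apply_sum]
    refine Finset.sum_congr rfl fun k _ => ?_
    rw [hpow k i]
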